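/- arXiv:2208.06602 — 3 statements merged into one kernel-verified Lean document; each statement's English description precedes it below -/
import Mathlib

section
/- The Hermite constant satisfies γ_n ≤ n for every n ≥ 1, i.e., for every full-rank lattice Λ in ℝ^n the shortest nonzero vector length δ₁(Λ) satisfies δ₁(Λ)^n ≤ n^{n/2}·Vol(Λ). -/
open MeasureTheory

/-- Hermite's bound `γ_n ≤ n`: for every full-rank lattice `Λ` in `ℝ^n` (`n ≥ 1`),
the length `δ₁(Λ)` of a shortest nonzero lattice vector satisfies
`δ₁(Λ)^n ≤ n^{n/2} · Vol(Λ)`. -/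
theorem hermite_constant_le (n : ℕ) (hn : 1 ≤ n)
    (Λ : Submodule ℤ (EuclideanSpace ℝ (Fin n)))
    [DiscreteTopology Λ] [IsZLattice ℝ Λ] :
    (sInf {r : ℝ | ∃ v ∈ Λ, v ≠ 0 ∧ ‖v‖ = r}) ^ n ≤
      (n:ℝ) ^ ((n:ℝ) / 2) * ZLattice.covolume Λ volume := by
  have hn0 : (n : ℝ) ≠ 0 := Nat.cast_ne_zero.mpr (by omega)
  haveI : Nonempty (Fin n) := Fin.pos_iff_nonempty.mp (by omega)
  set V := ZLattice.covolume Λ volume with hV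
  have hVpos : 0 < V := ZLattice.covolume_pos Λ volume
  set r : ℝ := V ^ ((n:ℝ)⁻¹) with hr
  have hrpos : 0 < r := Real.rpow_pos_of_pos hVpos _
  have hrn : r ^ n = V := by
    rw [hr, ← Real.rpow_natCast (V ^ ((n:ℝ)⁻¹)) n, ← Real.rpow_mul hVpos.le,
      inv_mul_cancel₀ hn0, Real.rpow_one]
  set e := EuclideanSpace.equiv (Fin n) ℝ with he
  set P : Set (Fin n → ℝ) := Set.univ.pi fun _ => Set.Icc (-r) r with hP
  set s : Set (EuclideanSpace ℝ (Fin n)) := ⇑e ⁻¹' P with hs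
  have hmem : ∀ x : EuclideanSpace ℝ (Fin n), x ∈ s ↔ ∀ i, x i ∈ Set.Icc (-r) r := by
    intro x
    simp only [hs, Set.mem_preimage, hP, Set.mem_pi, Set.mem_univ, forall_true_left]
    exact Iff.rfl
  -- symmetric
  have hsymm : ∀ x ∈ s, -x ∈ s := by
    intro x hx
    rw [hmem] at hx ⊢
    intro i
    have := hx i
    rw [Set.mem_Icc] at this ⊢
    constructor <;> simp only [PiLp.neg_apply] <;> linarith [this.1, this.2]
  -- convex
  have hconv : Convex ℝ s := by
    have hconvP : Convex ℝ P := convex_pi fun i _ => convex_Icc _ _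
    exact hconvP.linear_preimage (e : EuclideanSpace ℝ (Fin n) →ₗ[ℝ] (Fin n → ℝ))
  -- compact
  have hcpt : IsCompact s :=
    e.toHomeomorph.isCompact_preimage.mpr (isCompact_univ_pi fun _ => isCompact_Icc)
  -- volume
  have hsP : s = ⇑(MeasurableEquiv.toLp 2 (Fin n → ℝ)).symm ⁻¹' P := rfl
  have hvol : volume s = ENNReal.ofReal (2 * r) ^ n := by
    rw [hsP, (EuclideanSpace.volume_preserving_symm_measurableEquiv_toLp (Fin n)).measure_preimage
      ((MeasurableSet.univ_pi fun _ => measurableSet_Icc).nullMeasurableSet)]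
    rw [volume_pi_pi]
    simp [Real.volume_Icc, two_mul]
  -- fundamental domain
  set b := Module.Free.chooseBasis ℤ Λ with hb
  set F := ZSpan.fundamentalDomain (b.ofZLatticeBasis ℝ) with hF
  have hFD : IsAddFundamentalDomain Λ.toAddSubgroup F volume :=
    ZLattice.isAddFundamentalDomain b volume
  have hFvol : volume F = ENNReal.ofReal V := by
    have hfin : volume F ≠ ⊤ :=
      ne_of_lt ((ZSpan.fundamentalDomain_isBounded _).measure_lt_top)
    rw [hV, ZLattice.covolume_eq_measure_fundamentalDomain Λ volume
      (ZLattice.isAddFundamentalDomain b volume), ← hF, measureReal_def, ENNReal.ofReal_toReal hfin]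
  -- Minkowski
  have hle : volume F * 2 ^ Module.finrank ℝ (EuclideanSpace ℝ (Fin n)) ≤ volume s := by
    rw [finrank_euclideanSpace_fin, hFvol, hvol, ← ENNReal.ofReal_pow (by positivity),
      mul_pow, hrn, ENNReal.ofReal_mul (by positivity),
      ENNReal.ofReal_pow (by norm_num), ENNReal.ofReal_ofNat, mul_comm]
  haveI : Countable Λ.toAddSubgroup := (inferInstance : Countable Λ)
  haveI : DiscreteTopology Λ.toAddSubgroup := (inferInstance : DiscreteTopology Λ)
  obtain ⟨x, hx0, hxs⟩ :=
    exists_ne_zero_mem_lattice_of_measure_mul_two_pow_le_measure hFD hsymm hconv hcpt hle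
  -- bound the norm of x
  have hxnorm : ‖(x : EuclideanSpace ℝ (Fin n))‖ ≤ Real.sqrt n * r := by
    rw [EuclideanSpace.norm_eq]
    have hbound : ∀ i, ‖(x : EuclideanSpace ℝ (Fin n)) i‖ ^ 2 ≤ r ^ 2 := by
      intro i
      have := (hmem _).mp hxs i
      rw [Set.mem_Icc] at this
      rw [Real.norm_eq_abs, sq_abs]
      nlinarith [this.1, this.2]
    calc Real.sqrt (∑ i, ‖(x : EuclideanSpace ℝ (Fin n)) i‖ ^ 2)
        ≤ Real.sqrt (∑ _i : Fin n, r ^ 2) :=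
          Real.sqrt_le_sqrt (Finset.sum_le_sum fun i _ => hbound i)
      _ = Real.sqrt n * r := by
          rw [Finset.sum_const, Finset.card_fin, nsmul_eq_mul, Real.sqrt_mul (by positivity),
            Real.sqrt_sq hrpos.le]
  -- conclude
  set S := {t : ℝ | ∃ v ∈ Λ, v ≠ 0 ∧ ‖v‖ = t} with hS
  have hSmem : ‖(x : EuclideanSpace ℝ (Fin n))‖ ∈ S :=
    ⟨(x : EuclideanSpace ℝ (Fin n)), x.2, (ZeroMemClass.coe_eq_zero).not.mpr hx0, rfl⟩
  have hbdd : BddBelow S := ⟨0, fun t ht => by obtain ⟨v, _, _, rfl⟩ := ht; exact norm_nonneg v⟩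
  have h1 : sInf S ≤ ‖(x : EuclideanSpace ℝ (Fin n))‖ := csInf_le hbdd hSmem
  have h0 : 0 ≤ sInf S :=
    le_csInf ⟨_, hSmem⟩ fun t ht => by obtain ⟨v, _, _, rfl⟩ := ht; exact norm_nonneg v
  calc (sInf S) ^ n ≤ ‖(x : EuclideanSpace ℝ (Fin n))‖ ^ n := pow_le_pow_left₀ h0 h1 n
    _ ≤ (Real.sqrt n * r) ^ n := pow_le_pow_left₀ (norm_nonneg _) hxnorm n
    _ = (n:ℝ) ^ ((n:ℝ) / 2) * V := by
        rw [mul_pow, hrn, Real.sqrt_eq_rpow, ← Real.rpow_natCast ((n:ℝ) ^ ((1:ℝ)/2)) n,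
          ← Real.rpow_mul (Nat.cast_nonneg n), div_mul_eq_mul_div, one_mul]
end

section
/- Let x = (x₁,…,x_{r₁+r₂}) ∈ ℝ^{r₁} × ℂ^{r₂} lie in the region F(0,1/m₁,…,0,1/m_r,X), i.e. its coordinates satisfy |x_i| = α(x)^{1/n}·∏_{j=1}^r |σ_i(η_j)|^{α_{j+1}(x)} with 0 < α(x) ≤ X and 0 ≤ α_{j+1}(x) < 1/m_j for each j. Then, identifying x with a point of ℝ^n via real and imaginary parts, its Euclidean norm satisfies ‖h'(x)‖ ≤ √(r+1)·e^r·X^{1/n}. -/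
/-- Lemma: a point `x = (x₁,…,x_{r₁+r₂}) ∈ ℝ^{r₁} × ℂ^{r₂}` of the region
`F(0,1/m₁,…,0,1/m_r,X)`, i.e. whose coordinates satisfy
`|x_i| = α^{1/n}·∏_j E_{ij}^{a_j}` with `0 < α ≤ X`, `0 ≤ a_j < 1/m_j`, where
`E_{ij} = |σ_i(η_j)|` satisfies `log E_{ij} ≤ m_j`, has Euclidean norm (after
identifying `ℂ` with `ℝ²`) at most `√(r+1)·e^r·X^{1/n}`. -/
theorem norm_bound_in_F (r₁ r₂ n r : ℕ) (hn : n = r₁ + 2 * r₂) (hn1 : 1 ≤ n)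
    (hr : r + 1 = r₁ + r₂)
    (m : Fin r → ℕ) (hm : ∀ j, 1 ≤ m j)
    (E : (Fin r₁ ⊕ Fin r₂) → Fin r → ℝ)
    (hEpos : ∀ i j, 0 < E i j) (hE : ∀ i j, Real.log (E i j) ≤ m j)
    (X : ℝ) (hX : 0 < X)
    (α : ℝ) (hα : 0 < α) (hαX : α ≤ X)
    (a : Fin r → ℝ) (ha : ∀ j, 0 ≤ a j) (ha' : ∀ j, a j < 1 / (m j : ℝ))
    (xre : Fin r₁ → ℝ) (xc : Fin r₂ → ℂ)
    (hre : ∀ i, |xre i| = α ^ ((1:ℝ) / n) * ∏ j, E (Sum.inl i) j ^ (a j))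
    (hc : ∀ i, ‖xc i‖ = α ^ ((1:ℝ) / n) * ∏ j, E (Sum.inr i) j ^ (a j)) :
    Real.sqrt (∑ i, (xre i) ^ 2 + ∑ i, ((xc i).re ^ 2 + (xc i).im ^ 2)) ≤
      Real.sqrt ((r:ℝ) + 1) * Real.exp r * X ^ ((1:ℝ) / n) := by

  set B : ℝ := Real.exp r * X ^ ((1:ℝ) / n) with hB
  have hXpow : (0:ℝ) < X ^ ((1:ℝ)/n) := Real.rpow_pos_of_pos hX _
  have hBpos : 0 < B := mul_pos (Real.exp_pos _) hXpow
  -- product bound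
  have hprod : ∀ i : Fin r₁ ⊕ Fin r₂, (∏ j, E i j ^ (a j)) ≤ Real.exp r := by
    intro i
    calc (∏ j, E i j ^ (a j)) ≤ ∏ _j : Fin r, Real.exp 1 := by
          apply Finset.prod_le_prod
          · intro j _; exact (Real.rpow_pos_of_pos (hEpos i j) _).le
          · intro j _
            have h1 : E i j ^ (a j) = Real.exp (a j * Real.log (E i j)) := by
              rw [Real.rpow_def_of_pos (hEpos i j), mul_comm]
            rw [h1]
            apply Real.exp_le_exp.2
            have h2 : a j * Real.log (E i j) ≤ a j * m j :=
              mul_le_mul_of_nonneg_left (hE i j) (ha j)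
            have hmj : (0:ℝ) < m j := by exact_mod_cast hm j
            have h3 : a j * m j ≤ 1 := by
              have := (ha' j).le
              calc a j * m j ≤ (1 / (m j:ℝ)) * m j :=
                    mul_le_mul_of_nonneg_right this hmj.le
                _ = 1 := by field_simp
            linarith
      _ = Real.exp r := by
          rw [Finset.prod_const, ← Real.exp_nat_mul]
          simp
  have halpha : α ^ ((1:ℝ)/n) ≤ X ^ ((1:ℝ)/n) :=
    Real.rpow_le_rpow hα.le hαX (by positivity)
  have habs : ∀ i : Fin r₁ ⊕ Fin r₂,
      α ^ ((1:ℝ)/n) * (∏ j, E i j ^ (a j)) ≤ B := by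
    intro i
    rw [hB, mul_comm (Real.exp (r:ℝ))]
    exact mul_le_mul halpha (hprod i) (Finset.prod_nonneg fun j _ =>
      (Real.rpow_pos_of_pos (hEpos i j) _).le) hXpow.le
  have hre' : ∀ i, (xre i) ^ 2 ≤ B ^ 2 := by
    intro i
    have := habs (Sum.inl i)
    rw [← hre i] at this
    calc (xre i)^2 = |xre i|^2 := (sq_abs _).symm
      _ ≤ B^2 := pow_le_pow_left₀ (abs_nonneg _) this 2
  have hc' : ∀ i, (xc i).re ^ 2 + (xc i).im ^ 2 ≤ B ^ 2 := by
    intro i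
    have h1 := habs (Sum.inr i)
    rw [← hc i] at h1
    have h2 : (xc i).re ^ 2 + (xc i).im ^ 2 = (‖xc i‖)^2 := by
      rw [Complex.sq_norm, Complex.normSq_apply]; ring
    rw [h2]
    exact pow_le_pow_left₀ (norm_nonneg _) h1 2
  have hsum : (∑ i, (xre i) ^ 2 + ∑ i, ((xc i).re ^ 2 + (xc i).im ^ 2))
      ≤ ((r:ℝ) + 1) * B ^ 2 := by
    have h1 : ∑ i, (xre i) ^ 2 ≤ (r₁:ℝ) * B^2 := by
      calc ∑ i, (xre i)^2 ≤ ∑ _i : Fin r₁, B^2 :=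
            Finset.sum_le_sum fun i _ => hre' i
        _ = (r₁:ℝ) * B^2 := by simp [Finset.sum_const, nsmul_eq_mul]
    have h2 : ∑ i, ((xc i).re ^ 2 + (xc i).im ^ 2) ≤ (r₂:ℝ) * B^2 := by
      calc ∑ i, ((xc i).re^2 + (xc i).im^2) ≤ ∑ _i : Fin r₂, B^2 :=
            Finset.sum_le_sum fun i _ => hc' i
        _ = (r₂:ℝ) * B^2 := by simp [Finset.sum_const, nsmul_eq_mul]
    have : ((r:ℝ) + 1) = (r₁:ℝ) + r₂ := by exact_mod_cast congrArg (Nat.cast (R := ℝ)) hr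
    rw [this]; nlinarith
  calc Real.sqrt (∑ i, (xre i) ^ 2 + ∑ i, ((xc i).re ^ 2 + (xc i).im ^ 2))
      ≤ Real.sqrt (((r:ℝ) + 1) * B ^ 2) := Real.sqrt_le_sqrt hsum
    _ = Real.sqrt ((r:ℝ) + 1) * B := by
        rw [Real.sqrt_mul (by positivity), Real.sqrt_sq hBpos.le]
    _ = Real.sqrt ((r:ℝ) + 1) * Real.exp r * X ^ ((1:ℝ) / n) := by
        rw [hB]; ring
end

section
/- Let K be a number field of degree n ≥ 2 and let 𝔞, 𝔮 be coprime integral ideals. By Minkowski's lattice point theorem there exists a nonzero a ∈ 𝔞𝔮 with |N(a)| < (2/π)^{r₂}·√|d_K|·N(𝔞𝔮), and consequently, for any vector k ∈ ∏_j [0,m_j) ∩ ℤ, there is a unit u ∈ O_K^* such that the twisted embedding of a·u^{−1} satisfies ‖φ(a·u^{−1})·β_k‖ ≤ |N(a)|^{1/n}·√(r+1)·e^{∑_{j=1}^r m_j}, where β_k = (∏_j |σ_i(η_j)|^{−k_j/m_j})_i. -/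
open NumberField NumberField.Units NumberField.InfinitePlace


namespace PiSqAux

noncomputable section

open intervalIntegral MeasureTheory.MeasureSpace Set Polynomial Real
open scoped Nat

/-- The sequence of integrals used for Cartwright's proof of irrationality of `π`. -/
def I (n : ℕ) (θ : ℝ) : ℝ := ∫ x in (-1)..1, (1 - x ^ 2) ^ n * cos (x * θ)

variable {n : ℕ} {θ : ℝ}

lemma I_zero : I 0 θ * θ = 2 * sin θ := by
  rw [mul_comm, I]
  simp [mul_integral_comp_mul_right, two_mul]

/--
Auxiliary for the proof that `π` is irrational.
While it is most natural to give the recursive formula for `I (n + 2) θ`, as well as give the second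
base case of `I 1 θ`, it is in fact more convenient to give the recursive formula for `I (n + 1) θ`
in terms of `I n θ` and `I (n - 1) θ` (note the natural subtraction!).
Despite the usually inconvenient subtraction, this in fact allows deducing both of the above facts
with significantly fewer analysis computations.
In addition, note the `0 ^ n` on the right hand side - this is intentional, and again allows
combining the proof of the "usual" recursion formula and the base case `I 1 θ`.
-/
lemma recursion' (n : ℕ) :
    I (n + 1) θ * θ ^ 2 = - (2 * 2 * ((n + 1) * (0 ^ n * cos θ))) +
      2 * (n + 1) * (2 * n + 1) * I n θ - 4 * (n + 1) * n * I (n - 1) θ := by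
  rw [I]
  let f (x : ℝ) : ℝ := 1 - x ^ 2
  let u₁ (x : ℝ) : ℝ := f x ^ (n + 1)
  let u₁' (x : ℝ) : ℝ := - (2 * (n + 1) * x * f x ^ n)
  let v₁ (x : ℝ) : ℝ := sin (x * θ)
  let v₁' (x : ℝ) : ℝ := cos (x * θ) * θ
  let u₂ (x : ℝ) : ℝ := x * (f x) ^ n
  let u₂' (x : ℝ) : ℝ := (f x) ^ n - 2 * n * x ^ 2 * (f x) ^ (n - 1)
  let v₂ (x : ℝ) : ℝ := cos (x * θ)
  let v₂' (x : ℝ) : ℝ := -sin (x * θ) * θ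
  have hfd : Continuous f := by fun_prop
  have hu₁d : Continuous u₁' := by fun_prop
  have hv₁d : Continuous v₁' := by fun_prop
  have hu₂d : Continuous u₂' := by fun_prop
  have hv₂d : Continuous v₂' := by fun_prop
  have hu₁_eval_one : u₁ 1 = 0 := by simp only [u₁, f]; simp
  have hu₁_eval_neg_one : u₁ (-1) = 0 := by simp only [u₁, f]; simp
  have t : u₂ 1 * v₂ 1 - u₂ (-1) * v₂ (-1) = 2 * (0 ^ n * cos θ) := by simp [u₂, v₂, f, ← two_mul]
  have hf (x) : HasDerivAt f (- 2 * x) x := by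
    refine ((hasDerivAt_pow 2 x).const_sub 1).congr_deriv ?_
    simp
  have hu₁ (x) : HasDerivAt u₁ (u₁' x) x := by
    refine ((hf x).pow (n + 1)).congr_deriv ?_
    simp only [Nat.add_succ_sub_one, u₁', Nat.cast_add_one]
    ring
  have hv₁ (x) : HasDerivAt v₁ (v₁' x) x := (hasDerivAt_mul_const θ).sin
  have hu₂ (x) : HasDerivAt u₂ (u₂' x) x := by
    refine ((hasDerivAt_id' x).mul ((hf x).pow n)).congr_deriv ?_
    simp only [u₂', Pi.pow_apply]
    ring
  have hv₂ (x) : HasDerivAt v₂ (v₂' x) x := (hasDerivAt_mul_const θ).cos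
  convert_to (∫ (x : ℝ) in (-1)..1, u₁ x * v₁' x) * θ = _ using 1
  · simp_rw [u₁, f, v₁', ← intervalIntegral.integral_mul_const, sq θ, mul_assoc]
  rw [integral_mul_deriv_eq_deriv_mul (fun x _ => hu₁ x) (fun x _ => hv₁ x)
    (hu₁d.intervalIntegrable _ _) (hv₁d.intervalIntegrable _ _), hu₁_eval_one, hu₁_eval_neg_one,
    zero_mul, zero_mul, sub_zero, zero_sub, ← integral_neg, ← integral_mul_const]
  convert_to ((-2 : ℝ) * (n + 1)) * ∫ (x : ℝ) in (-1)..1, (u₂ x * v₂' x) = _ using 1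
  · rw [← integral_const_mul]
    congr 1 with x
    dsimp [u₁', v₁, u₂, v₂']
    ring
  rw [integral_mul_deriv_eq_deriv_mul (fun x _ => hu₂ x) (fun x _ => hv₂ x)
    (hu₂d.intervalIntegrable _ _) (hv₂d.intervalIntegrable _ _),
    mul_sub, t, neg_mul, neg_mul, neg_mul, sub_neg_eq_add]
  have this (x) : u₂' x = (2 * n + 1) * f x ^ n - 2 * n * f x ^ (n - 1) := by
    cases n with
    | zero => simp [u₂']
    | succ n => ring!
  simp_rw [this, sub_mul, mul_assoc _ _ (v₂ _)]
  have : Continuous v₂ := by fun_prop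
  rw [mul_mul_mul_comm, integral_sub, mul_sub, add_sub_assoc]
  · congr 1
    simp_rw [integral_const_mul]
    ring!
  all_goals exact Continuous.intervalIntegrable (by fun_prop) _ _

/--
Auxiliary for the proof that `π` is irrational.
The recursive formula for `I (n + 2) θ * θ ^ 2` in terms of `I n θ` and `I (n + 1) θ`.
-/
lemma recursion (n : ℕ) :
    I (n + 2) θ * θ ^ 2 =
      2 * (n + 2) * (2 * n + 3) * I (n + 1) θ - 4 * (n + 2) * (n + 1) * I n θ := by
  rw [recursion' (n + 1)]
  simp
  ring!

/--
Auxiliary for the proof that `π` is irrational.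
The second base case for the induction on `n`, giving an explicit formula for `I 1 θ`.
-/
lemma I_one : I 1 θ * θ ^ 3 = 4 * sin θ - 4 * θ * cos θ := by
  rw [_root_.pow_succ, ← mul_assoc, recursion' 0, sub_mul, add_mul, mul_assoc _ (I 0 θ), I_zero]
  ring

/--
Auxiliary for the proof that `π` is irrational.
The first of the two integer-coefficient polynomials that describe the behaviour of the
sequence of integrals `I`.
While not given in the informal proof, these are easy to deduce from the recursion formulae.
-/
def sinPoly : ℕ → ℤ[X]
  | 0 => C 2
  | 1 => C 4
  | (n+2) => ((2 : ℤ) * (2 * n + 3)) • sinPoly (n + 1) + monomial 2 (-4) * sinPoly n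

/--
Auxiliary for the proof that `π` is irrational.
The second of the two integer-coefficient polynomials that describe the behaviour of the
sequence of integrals `I`.
While not given in the informal proof, these are easy to deduce from the recursion formulae.
-/
def cosPoly : ℕ → ℤ[X]
  | 0 => 0
  | 1 => monomial 1 (-4)
  | (n+2) => ((2 : ℤ) * (2 * n + 3)) • cosPoly (n + 1) + monomial 2 (-4) * cosPoly n

/--
Auxiliary for the proof that `π` is irrational.
Prove a degree bound for `sinPoly n` by induction. Note this is where we find the value in an
explicit description of `sinPoly`.
-/
lemma sinPoly_natDegree_le : ∀ n : ℕ, (sinPoly n).natDegree ≤ n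
  | 0 => by simp [sinPoly]
  | 1 => by simp only [natDegree_C, mul_one, zero_le', sinPoly]
  | n + 2 => by
      rw [sinPoly]
      refine natDegree_add_le_of_degree_le ((natDegree_smul_le _ _).trans ?_) ?_
      · exact (sinPoly_natDegree_le (n + 1)).trans (by simp)
      refine natDegree_mul_le.trans ?_
      simpa [add_comm 2] using sinPoly_natDegree_le n

/--
Auxiliary for the proof that `π` is irrational.
Prove a degree bound for `cosPoly n` by induction. Note this is where we find the value in an
explicit description of `cosPoly`.
-/
lemma cosPoly_natDegree_le : ∀ n : ℕ, (cosPoly n).natDegree ≤ n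
  | 0 => by simp [cosPoly]
  | 1 => (natDegree_monomial_le _).trans (by simp)
  | n + 2 => by
      rw [cosPoly]
      refine natDegree_add_le_of_degree_le ((natDegree_smul_le _ _).trans ?_) ?_
      · exact (cosPoly_natDegree_le (n + 1)).trans (by simp)
      exact natDegree_mul_le.trans (by simp [add_comm 2, cosPoly_natDegree_le n])

/--
Auxiliary for the proof that `π` is irrational.
The key lemma: the sequence of integrals `I` can be written as a linear combination of `sin` and
`cos`, with coefficients given by the polynomials `sinPoly` and `cosPoly`.
-/
lemma sinPoly_add_cosPoly_eval (θ : ℝ) :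
    ∀ n : ℕ,
      I n θ * θ ^ (2 * n + 1) = n ! * ((sinPoly n).eval₂ (Int.castRingHom _) θ * sin θ +
        (cosPoly n).eval₂ (Int.castRingHom _) θ * cos θ)
  | 0 => by simp [sinPoly, cosPoly, I_zero]
  | 1 => by simp [I_one, sinPoly, cosPoly, sub_eq_add_neg]
  | n + 2 => by
      calc I (n + 2) θ * θ ^ (2 * (n + 2) + 1) = I (n + 2) θ * θ ^ 2 * θ ^ (2 * n + 3) := by ring
        _ = 2 * (n + 2) * (2 * n + 3) * (I (n + 1) θ * θ ^ (2 * (n + 1) + 1)) -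
            4 * (n + 2) * (n + 1) * θ ^ 2 * (I n θ * θ ^ (2 * n + 1)) := by rw [recursion]; ring
        _ = _ := by simp [sinPoly_add_cosPoly_eval, sinPoly, cosPoly, Nat.factorial_succ]; ring

/--
Auxiliary for the proof that `π` is irrational.
For a polynomial `p` with natural degree `≤ k` and integer coefficients, evaluating `p` at a
rational `a / b` gives a rational of the form `z / b ^ k`.
TODO: should this be moved elsewhere? It uses none of the pi-specific definitions.
-/
lemma is_integer {p : ℤ[X]} (a b : ℤ) {k : ℕ} (hp : p.natDegree ≤ k) :
    ∃ z : ℤ, p.eval₂ (Int.castRingHom ℝ) (a / b) * b ^ k = z := by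
  rcases eq_or_ne b 0 with rfl | hb
  · rcases k.eq_zero_or_pos with rfl | hk
    · exact ⟨p.coeff 0, by simp⟩
    exact ⟨0, by simp [hk.ne']⟩
  refine ⟨∑ i ∈ p.support, p.coeff i * a ^ i * b ^ (k - i), ?_⟩
  conv => lhs; rw [← sum_monomial_eq p]
  rw [eval₂_sum, sum, Finset.sum_mul, Int.cast_sum]
  simp only [eval₂_monomial, eq_intCast, div_pow, Int.cast_mul, Int.cast_pow]
  refine Finset.sum_congr rfl (fun i hi => ?_)
  have ik := (le_natDegree_of_mem_supp i hi).trans hp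
  rw [mul_assoc, div_mul_comm, ← Int.cast_pow, ← Int.cast_pow, ← Int.cast_pow,
    ← pow_sub_mul_pow b ik, ← Int.cast_div_charZero, Int.mul_ediv_cancel _ (pow_ne_zero _ hb),
    ← mul_assoc, mul_right_comm, ← Int.cast_pow]
  exact dvd_mul_left _ _

open Filter

/--
Auxiliary for the proof that `π` is irrational.
The integrand in the definition of `I` is nonnegative and takes a positive value at least one point,
so the integral is positive.
-/
lemma I_pos : 0 < I n (π / 2) := by
  refine integral_pos (by norm_num) (Continuous.continuousOn (by continuity)) ?_ ⟨0, by simp⟩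
  refine fun x hx => mul_nonneg (pow_nonneg ?_ _) ?_
  · rw [sub_nonneg, sq_le_one_iff_abs_le_one, abs_le]
    exact ⟨hx.1.le, hx.2⟩
  refine cos_nonneg_of_neg_pi_div_two_le_of_le ?_ ?_ <;>
  nlinarith [hx.1, hx.2, pi_pos]

/--
Auxiliary for the proof that `π` is irrational.
The integrand in the definition of `I` is bounded by 1 and the interval has length 2, so the
integral is bounded above by `2`.
-/
lemma I_le (n : ℕ) : I n (π / 2) ≤ 2 := by
  rw [← norm_of_nonneg I_pos.le]
  refine (norm_integral_le_of_norm_le_const ?_).trans (show (1 : ℝ) * _ ≤ _ by norm_num)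
  intros x hx
  simp only [uIoc_of_le, neg_le_self_iff, zero_le_one, mem_Ioc] at hx
  rw [norm_eq_abs, abs_mul, abs_pow]
  refine mul_le_one₀ (pow_le_one₀ (abs_nonneg _) ?_) (abs_nonneg _) (abs_cos_le_one _)
  rw [abs_le]
  constructor <;> nlinarith

/--
Auxiliary for the proof that `π` is irrational.
For any real `a`, we have that `a ^ (2n+1) / n!` tends to `0` as `n → ∞`.  This is just a
reformulation of tendsto_pow_div_factorial_atTop, which asserts the same for `a ^ n / n!`
-/
lemma tendsto_pow_div_factorial_at_top_aux (a : ℝ) :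
    Tendsto (fun n => (a : ℝ) ^ (2 * n + 1) / n !) atTop (nhds 0) := by
  rw [← mul_zero a]
  refine ((FloorSemiring.tendsto_pow_div_factorial_atTop (a ^ 2)).const_mul a).congr (fun x => ?_)
  rw [← pow_mul, mul_div_assoc', _root_.pow_succ']


lemma sinPoly_even : ∀ n : ℕ, ∃ q : ℤ[X], q.natDegree ≤ n ∧ sinPoly n = q.comp (X ^ 2)
  | 0 => ⟨C 2, by simp, by simp [sinPoly]⟩
  | 1 => ⟨C 4, by simp, by simp [sinPoly]⟩
  | n + 2 => by
    obtain ⟨q1, hq1d, hq1⟩ := sinPoly_even (n + 1)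
    obtain ⟨q0, hq0d, hq0⟩ := sinPoly_even n
    refine ⟨((2 : ℤ) * (2 * n + 3)) • q1 + monomial 1 (-4) * q0, ?_, ?_⟩
    · refine natDegree_add_le_of_degree_le ((natDegree_smul_le _ _).trans
        (hq1d.trans (by omega))) (natDegree_mul_le.trans ?_)
      have h1 : (monomial 1 (-4 : ℤ)).natDegree ≤ 1 := natDegree_monomial_le _
      omega
    · rw [sinPoly, hq1, hq0, add_comp, Polynomial.smul_comp, mul_comp]
      congr 1
      rw [← C_mul_X_pow_eq_monomial, ← C_mul_X_pow_eq_monomial]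
      simp [mul_comp, pow_comp, X_comp]

theorem irrational_pi_sq : Irrational (π ^ 2) := by
  by_contra h'
  rw [Irrational, not_not, Set.mem_range] at h'
  obtain ⟨q, hq⟩ := h'
  have hπ2 : (π / 2) ^ 2 = ((q / 4 : ℚ) : ℝ) := by
    rw [show ((q / 4 : ℚ) : ℝ) = (q : ℝ) / 4 by push_cast; ring, hq]; ring
  set a : ℤ := (q / 4 : ℚ).num with ha_def
  set b : ℕ := (q / 4 : ℚ).den with hb_def
  have hb : 0 < b := (q / 4 : ℚ).pos
  have hab : (π / 2) ^ 2 = (a : ℝ) / b := by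
    rw [hπ2]
    exact_mod_cast congrArg (fun x : ℚ => (x : ℝ)) (Rat.num_div_den (q / 4)).symm
  have ha : 0 < (a : ℝ) := by
    have h0 : (0 : ℝ) < (π / 2) ^ 2 := by positivity
    rw [hab, div_pos_iff] at h0
    have hbp : (0 : ℝ) < (b : ℝ) := by exact_mod_cast hb
    rcases h0 with h0 | h0
    · exact h0.1
    · linarith [h0.2]
  have j : ∀ᶠ n : ℕ in atTop, (a : ℝ) ^ n / n ! < 1 / 4 :=
    (FloorSemiring.tendsto_pow_div_factorial_atTop (a : ℝ)).eventually_lt_const (by norm_num)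
  obtain ⟨n, hn⟩ := j.exists
  obtain ⟨qp, hqd, hqe⟩ := sinPoly_even n
  obtain ⟨z, hz⟩ := is_integer a (b : ℤ) hqd
  push_cast at hz
  have e := sinPoly_add_cosPoly_eval (π / 2) n
  rw [cos_pi_div_two, sin_pi_div_two, mul_zero, mul_one, add_zero] at e
  have he : (sinPoly n).eval₂ (Int.castRingHom ℝ) (π / 2) =
      qp.eval₂ (Int.castRingHom ℝ) ((a : ℝ) / b) := by
    rw [hqe, eval₂_comp]
    simp only [eval₂_X_pow]
    rw [← hab]
  have hbne : ((b : ℝ)) ≠ 0 := by positivity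
  have hθ : (π / 2) ^ (2 * n + 1) = (π / 2) * ((a : ℝ) / b) ^ n := by
    rw [← hab, ← pow_mul]
    ring
  have key : I n (π / 2) * (π / 2) * (a : ℝ) ^ n = n ! * z := by
    rw [← hz, ← he]
    have : I n (π / 2) * (π / 2) * (a : ℝ) ^ n
        = (I n (π / 2) * (π / 2) ^ (2 * n + 1)) * b ^ n := by
      rw [hθ, div_pow, mul_comm_div]
      field_simp
    rw [this, e]
    ring
  have hz1 : (1 : ℝ) ≤ z := by
    have hzpos : (0 : ℝ) < z := by
      have : 0 < I n (π / 2) * (π / 2) * (a : ℝ) ^ n := by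
        have := I_pos (n := n)
        have hπ := pi_pos
        positivity
    -- divide
      rw [key] at this
      have hf : (0 : ℝ) < n ! := by positivity
      nlinarith
    exact_mod_cast Int.add_one_le_of_lt (by exact_mod_cast hzpos : (0 : ℤ) < z)
  have hzsmall : (z : ℝ) * n ! < n ! := by
    have hI := I_le n
    have hIp := I_pos (n := n)
    have h4 : (a : ℝ) ^ n < n ! / 4 := by
      rw [div_lt_div_iff₀ (by positivity) (by norm_num)] at hn
      linarith
    have hπ4 : (π / 2) ≤ 2 := by nlinarith [pi_le_four]
    have : I n (π / 2) * (π / 2) * (a : ℝ) ^ n ≤ 4 * (a : ℝ) ^ n := by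
      have h1 : I n (π / 2) * (π / 2) ≤ 4 := by nlinarith
      nlinarith [pow_pos ha n]
    rw [key] at this
    nlinarith [pow_pos ha n]
  have hfpos : (0 : ℝ) < n ! := by positivity
  nlinarith

end
end PiSqAux

open NumberField NumberField.Units NumberField.InfinitePlace

section FactBound

private lemma two_mul_pow_le_succ_pow (n : ℕ) (hn : 1 ≤ n) :
    2 * (n : ℝ) ^ n ≤ ((n : ℝ) + 1) ^ n := by
  have hn0 : (0 : ℝ) < n := by exact_mod_cast hn
  have ha : (-2 : ℝ) ≤ 1 / (n : ℝ) := le_trans (by norm_num : (-2:ℝ) ≤ 0) (by positivity)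
  have h := one_add_mul_le_pow ha n
  have h2 : (2 : ℝ) ≤ (1 + 1 / n) ^ n := by
    rw [mul_one_div, div_self hn0.ne'] at h
    linarith
  calc 2 * (n : ℝ) ^ n ≤ (1 + 1 / n) ^ n * (n : ℝ) ^ n := by
        have := pow_pos hn0 n
        nlinarith
    _ = ((n : ℝ) + 1) ^ n := by
        rw [← mul_pow]
        congr 1
        field_simp

private lemma fact_sqrt2_lt : ∀ n : ℕ, 3 ≤ n → (Nat.factorial n : ℝ) * Real.sqrt 2 ^ n < (n : ℝ) ^ n := by
  intro n hn
  induction n, hn using Nat.le_induction with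
  | base =>
      have hs : Real.sqrt 2 < 3 / 2 := by
        nlinarith [Real.sq_sqrt (show (0:ℝ) ≤ 2 by norm_num), Real.sqrt_nonneg 2]
      have hs0 : 0 ≤ Real.sqrt 2 := Real.sqrt_nonneg 2
      have : Real.sqrt 2 ^ 3 < (3/2)^3 := by
        exact pow_lt_pow_left₀ hs (by norm_num) (by norm_num)
      norm_num [Nat.factorial] at this ⊢
      nlinarith
  | succ n hn3 ih =>
      have hs2 : Real.sqrt 2 ≤ 2 := by
        nlinarith [Real.sq_sqrt (show (0:ℝ) ≤ 2 by norm_num), Real.sqrt_nonneg 2]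
      have hs0 : 0 < Real.sqrt 2 := Real.sqrt_pos.mpr (by norm_num)
      have hnp : (0 : ℝ) < ((n : ℝ)) := by exact_mod_cast lt_of_lt_of_le (by norm_num) hn3
      have ih' := ih
      have h1 : (Nat.factorial (n+1) : ℝ) * Real.sqrt 2 ^ (n+1)
          = ((n : ℝ) + 1) * Real.sqrt 2 * ((Nat.factorial n : ℝ) * Real.sqrt 2 ^ n) := by
        push_cast [Nat.factorial_succ]
        ring
      have h2 : ((n:ℝ)+1) * Real.sqrt 2 * ((Nat.factorial n : ℝ) * Real.sqrt 2 ^ n)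
          < ((n:ℝ)+1) * Real.sqrt 2 * (n:ℝ)^n := by
        have hpos : 0 < ((n:ℝ)+1) * Real.sqrt 2 := by positivity
        exact (mul_lt_mul_iff_right₀ hpos).mpr ih'
      have h3 : ((n:ℝ)+1) * Real.sqrt 2 * (n:ℝ)^n ≤ ((n:ℝ)+1) * (((n:ℝ)+1)^n) := by
        have hb := two_mul_pow_le_succ_pow n (by omega)
        have hpow : 0 < ((n:ℝ))^n := pow_pos hnp n
        have h4 : Real.sqrt 2 * (n:ℝ)^n ≤ ((n:ℝ)+1)^n :=
          le_trans (by nlinarith) hb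
        calc ((n:ℝ)+1) * Real.sqrt 2 * (n:ℝ)^n = ((n:ℝ)+1) * (Real.sqrt 2 * (n:ℝ)^n) := by ring
          _ ≤ ((n:ℝ)+1) * (((n:ℝ)+1)^n) := mul_le_mul_of_nonneg_left h4 (by positivity)
      calc (Nat.factorial (n+1) : ℝ) * Real.sqrt 2 ^ (n+1)
          < ((n:ℝ)+1) * Real.sqrt 2 * (n:ℝ)^n := by rw [h1]; exact h2
        _ ≤ ((n:ℝ)+1) * (((n:ℝ)+1)^n) := h3
        _ = (((n:ℕ)+1 : ℕ) : ℝ) ^ (n+1) := by push_cast; ring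

private lemma fact_two_pow_lt (n r₂ : ℕ) (hn2 : 2 ≤ n) (hr : 2 * r₂ ≤ n)
    (hex : ¬(n = 2 ∧ r₂ = 1)) : (Nat.factorial n : ℝ) * 2 ^ r₂ < (n : ℝ) ^ n := by
  rcases eq_or_lt_of_le hn2 with h2 | h3
  · have hr0 : r₂ = 0 ∨ r₂ = 1 := by omega
    rcases hr0 with h | h
    · subst h; rw [← h2]; norm_num [Nat.factorial]
    · exact absurd ⟨h2.symm, h⟩ hex
  · have h3 : 3 ≤ n := h3
    have key := fact_sqrt2_lt n h3
    have h2r : (2 : ℝ) ^ r₂ ≤ Real.sqrt 2 ^ n := by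
      have : (2:ℝ) ^ r₂ = Real.sqrt 2 ^ (2 * r₂) := by
        rw [pow_mul, Real.sq_sqrt (by norm_num)]
      rw [this]
      exact pow_le_pow_right₀ (by
        rw [show (1:ℝ) = Real.sqrt 1 by simp]
        exact Real.sqrt_le_sqrt (by norm_num)) hr
    have hf : (0:ℝ) < Nat.factorial n := by positivity
    nlinarith

end FactBound

section UnitTwist

open Finset NumberField.Units.dirichletUnitTheorem

set_option maxHeartbeats 1000000

private lemma unit_twist_aux (K : Type*) [Field K] [NumberField K]
    (n : ℕ) (hn : n = Module.finrank ℚ K) (hn1 : 1 ≤ n)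
    (η : Fin (rank K) → (𝓞 K)ˣ)
    (hgen : ∀ u : (𝓞 K)ˣ, ∃ ζ ∈ torsion K, ∃ c : Fin (rank K) → ℤ, u = ζ * ∏ j, η j ^ c j)
    (m : Fin (rank K) → ℕ) (hm1 : ∀ j, 1 ≤ m j)
    (hm : ∀ j (w : InfinitePlace K), Real.log (w ((η j : 𝓞 K) : K)) ≤ (m j : ℝ))
    (a : 𝓞 K) (ha : a ≠ 0)
    (k : Fin (rank K) → ℤ) (hk : ∀ j, 0 ≤ k j ∧ k j < m j) :
    ∃ u : (𝓞 K)ˣ,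
      Real.sqrt (∑ w : InfinitePlace K,
        (w (((a : 𝓞 K) : K) * (((u⁻¹ : (𝓞 K)ˣ) : 𝓞 K) : K)) *
          ∏ j, (w ((η j : 𝓞 K) : K)) ^ (-(k j : ℝ) / (m j : ℝ))) ^ 2) ≤
      (|Algebra.norm ℚ ((a : 𝓞 K) : K)| : ℝ) ^ ((1:ℝ) / n) *
        Real.sqrt ((rank K : ℝ) + 1) * Real.exp (∑ j, (m j : ℝ)) := by
  classical
  set X : ℝ := (|Algebra.norm ℚ ((a : 𝓞 K) : K)| : ℝ) with hXdef
  have haK : ((a : 𝓞 K) : K) ≠ 0 := RingOfIntegers.coe_ne_zero_iff.mpr ha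
  have hNa : Algebra.norm ℚ ((a : 𝓞 K) : K) ≠ 0 := Algebra.norm_ne_zero_iff.mpr haK
  have hXpos : 0 < X := by
    rw [hXdef]
    exact abs_pos.mpr (by exact_mod_cast hNa)
  have hηK : ∀ j, ((η j : 𝓞 K) : K) ≠ 0 :=
    fun j => RingOfIntegers.coe_ne_zero_iff.mpr (η j).ne_zero
  have hwη : ∀ (w : InfinitePlace K) j, 0 < w ((η j : 𝓞 K) : K) :=
    fun w j => pos_iff.mpr (hηK j)
  have hwa : ∀ w : InfinitePlace K, 0 < w ((a : 𝓞 K) : K) := fun w => pos_iff.mpr haK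
  -- the log vectors
  set v : Fin (rank K) → ({w : InfinitePlace K // w ≠ dirichletUnitTheorem.w₀} → ℝ) :=
    fun j => logEmbedding K (Additive.ofMul (η j)) with hvdef
  -- log of units products, componentwise
  have hprodlog : ∀ (c : Fin (rank K) → ℤ) (w : InfinitePlace K),
      Real.log (w (((∏ j, η j ^ c j : (𝓞 K)ˣ) : 𝓞 K) : K)) =
        ∑ j, (c j : ℝ) * Real.log (w ((η j : 𝓞 K) : K)) := by
    intro c w
    have h1 : (((∏ j, η j ^ c j : (𝓞 K)ˣ) : 𝓞 K) : K) = ∏ j, ((η j : 𝓞 K) : K) ^ (c j) := by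
      push_cast [Units.coe_zpow]
      rfl
    rw [h1, map_prod]
    simp only [map_zpow₀]
    rw [Real.log_prod (fun j _ => (zpow_pos (hwη w j) _).ne')]
    exact Finset.sum_congr rfl fun j _ => Real.log_zpow _ _
  -- spanning
  have hvtop : (⊤ : Submodule ℝ _) ≤ Submodule.span ℝ (Set.range v) := by
    rw [← dirichletUnitTheorem.unitLattice_span_eq_top K]
    rw [Submodule.span_le]
    rintro x hx
    obtain ⟨u, -, rfl⟩ := hx
    obtain ⟨ζ, hζ, c, hu⟩ := hgen u.toMul
    have hx : (logEmbedding K) u = ∑ j, (c j : ℝ) • v j := by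
      funext w
      have hu' : u = Additive.ofMul (ζ * ∏ j, η j ^ c j) := by
        rw [← hu]
        rfl
      rw [hu']
      rw [ofMul_mul, map_add]
      rw [(logEmbedding_eq_zero_iff).mpr hζ]
      simp only [Pi.add_apply, Pi.zero_apply, zero_add]
      rw [logEmbedding_component]
      rw [hprodlog c w.1]
      simp only [Finset.sum_apply, Pi.smul_apply, hvdef, logEmbedding_component, smul_eq_mul]
      rw [Finset.mul_sum]
      exact Finset.sum_congr rfl fun j _ => by ring
    exact hx ▸ Submodule.sum_mem _ fun j _ =>
      Submodule.smul_mem _ _ (Submodule.subset_span ⟨j, rfl⟩)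
  -- the target vector
  set z : ({w : InfinitePlace K // w ≠ dirichletUnitTheorem.w₀} → ℝ) :=
    fun w => (mult w.1 : ℝ) * (Real.log (w.1 ((a : 𝓞 K) : K)) - Real.log X / n) with hzdef
  obtain ⟨t, ht⟩ := (Submodule.mem_span_range_iff_exists_fun ℝ).mp (hvtop (Submodule.mem_top (x := z)))
  -- global sums
  have hlogprod : ∀ x : K, x ≠ 0 →
      ∑ w : InfinitePlace K, (mult w : ℝ) * Real.log (w x)
        = Real.log ((|Algebra.norm ℚ x| : ℚ) : ℝ) := by
    intro x hx
    rw [← prod_eq_abs_norm x, Real.log_prod (fun w _ => by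
      have : 0 < w x := pos_iff.mpr hx
      positivity)]
    refine Finset.sum_congr rfl fun w _ => ?_
    rw [Real.log_pow]
  have hsum_a : ∑ w : InfinitePlace K, (mult w : ℝ) * Real.log (w ((a : 𝓞 K) : K))
      = Real.log X := by
    rw [hlogprod _ haK, hXdef, Rat.cast_abs]
  have hsum_η : ∀ j, ∑ w : InfinitePlace K, (mult w : ℝ) * Real.log (w ((η j : 𝓞 K) : K)) = 0 := by
    intro j
    have hN1 : |Algebra.norm ℚ (((η j) : 𝓞 K) : K)| = 1 := by
      rw [← RingOfIntegers.coe_norm, isUnit_iff_norm.mp (η j).isUnit]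
    rw [hlogprod _ (hηK j), hN1]
    norm_num
  have hsum_mult : ∑ w : InfinitePlace K, (mult w : ℝ) = (n : ℝ) := by
    have h := NumberField.InfinitePlace.sum_mult_eq (K := K)
    rw [hn]
    exact_mod_cast h
  -- F
  set F : InfinitePlace K → ℝ := fun w =>
    Real.log (w ((a : 𝓞 K) : K)) - Real.log X / n
      - ∑ j, t j * Real.log (w ((η j : 𝓞 K) : K)) with hFdef
  have hFne : ∀ w : InfinitePlace K, w ≠ dirichletUnitTheorem.w₀ → F w = 0 := by
    intro w hw
    have h1 := congrFun ht ⟨w, hw⟩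
    simp only [Finset.sum_apply, Pi.smul_apply, hvdef, hzdef, logEmbedding_component,
      smul_eq_mul] at h1
    have hmw : ((mult w : ℝ)) ≠ 0 := by
      have := (mult_pos (w := w))
      positivity
    have h2 : (mult w : ℝ) * (∑ j, t j * Real.log (w ((η j : 𝓞 K) : K)))
        = (mult w : ℝ) * (Real.log (w ((a : 𝓞 K) : K)) - Real.log X / n) := by
      rw [Finset.mul_sum, ← h1]
      exact Finset.sum_congr rfl fun j _ => by ring
    have h3 := mul_left_cancel₀ hmw h2
    simp only [hFdef]
    rw [h3]
    ring
  have hFsum : ∑ w : InfinitePlace K, (mult w : ℝ) * F w = 0 := by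
    have hexp : ∀ w : InfinitePlace K, (mult w : ℝ) * F w
        = (mult w : ℝ) * Real.log (w ((a : 𝓞 K) : K))
          - (mult w : ℝ) * (Real.log X / n)
          - ∑ j, t j * ((mult w : ℝ) * Real.log (w ((η j : 𝓞 K) : K))) := by
      intro w
      simp only [hFdef, mul_sub, Finset.mul_sum]
      congr 1
      exact Finset.sum_congr rfl fun j _ => by ring
    rw [Finset.sum_congr rfl fun w _ => hexp w]
    rw [Finset.sum_sub_distrib, Finset.sum_sub_distrib, hsum_a]
    rw [← Finset.sum_mul, hsum_mult]
    rw [Finset.sum_comm]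
    have hz0 : ∀ j, ∑ w : InfinitePlace K, t j * ((mult w : ℝ)
        * Real.log (w ((η j : 𝓞 K) : K))) = 0 := by
      intro j
      rw [← Finset.mul_sum, hsum_η j, mul_zero]
    rw [Finset.sum_congr rfl fun j _ => hz0 j]
    have hn0 : (n : ℝ) ≠ 0 := by
      have : (0:ℕ) < n := hn1
      positivity
    field_simp
    simp
  have hF : ∀ w : InfinitePlace K, F w = 0 := by
    intro w
    by_cases hw : w = dirichletUnitTheorem.w₀
    · have h1 : ∑ w' : InfinitePlace K, (mult w' : ℝ) * F w' = (mult w : ℝ) * F w := by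
        refine Finset.sum_eq_single_of_mem w (Finset.mem_univ _) fun w' _ hw' => ?_
        rw [hFne w' (fun h => hw' (h.trans hw.symm)), mul_zero]
      rw [hFsum] at h1
      have hmw : ((mult w : ℝ)) ≠ 0 := by
        have := (mult_pos (w := w))
        positivity
      have := h1.symm
      rcases mul_eq_zero.mp this with h | h
      · exact absurd h hmw
      · exact h
    · exact hFne w hw
  -- now construct the unit
  set c : Fin (rank K) → ℤ := fun j => ⌊t j - (k j : ℝ) / (m j : ℝ)⌋ with hcdef
  refine ⟨∏ j, η j ^ c j, ?_⟩
  set u : (𝓞 K)ˣ := ∏ j, η j ^ c j with hudef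
  set s : Fin (rank K) → ℝ := fun j => t j - (k j : ℝ) / (m j : ℝ) - c j with hsdef
  have hs0 : ∀ j, 0 ≤ s j := fun j => by
    simp only [hsdef, hcdef, sub_nonneg]
    exact Int.floor_le _
  have hs1 : ∀ j, s j < 1 := fun j => by
    simp only [hsdef, hcdef]
    have := Int.lt_floor_add_one (t j - (k j : ℝ) / (m j : ℝ))
    linarith
  -- pointwise computation
  set M : ℝ := X ^ ((1:ℝ)/n) * Real.exp (∑ j, (m j : ℝ)) with hMdef
  have hMnn : 0 ≤ M := by positivity
  have hTw : ∀ w : InfinitePlace K,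
      0 ≤ w (((a : 𝓞 K) : K) * (((u⁻¹ : (𝓞 K)ˣ) : 𝓞 K) : K)) *
          ∏ j, (w ((η j : 𝓞 K) : K)) ^ (-(k j : ℝ) / (m j : ℝ)) ∧
      w (((a : 𝓞 K) : K) * (((u⁻¹ : (𝓞 K)ˣ) : 𝓞 K) : K)) *
          ∏ j, (w ((η j : 𝓞 K) : K)) ^ (-(k j : ℝ) / (m j : ℝ)) ≤ M := by
    intro w
    have huinvK : (((u⁻¹ : (𝓞 K)ˣ) : 𝓞 K) : K) ≠ 0 :=
      RingOfIntegers.coe_ne_zero_iff.mpr (u⁻¹).ne_zero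
    have hwu : 0 < w (((u⁻¹ : (𝓞 K)ˣ) : 𝓞 K) : K) := pos_iff.mpr huinvK
    have hTpos : 0 < w (((a : 𝓞 K) : K) * (((u⁻¹ : (𝓞 K)ˣ) : 𝓞 K) : K)) *
        ∏ j, (w ((η j : 𝓞 K) : K)) ^ (-(k j : ℝ) / (m j : ℝ)) := by
      rw [map_mul]
      have h1 : 0 < ∏ j, (w ((η j : 𝓞 K) : K)) ^ (-(k j : ℝ) / (m j : ℝ)) :=
        Finset.prod_pos fun j _ => Real.rpow_pos_of_pos (hwη w j) _
      have := hwa w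
      positivity
    refine ⟨hTpos.le, ?_⟩
    -- compute the log
    have hlogu : Real.log (w (((u⁻¹ : (𝓞 K)ˣ) : 𝓞 K) : K))
        = - ∑ j, (c j : ℝ) * Real.log (w ((η j : 𝓞 K) : K)) := by
      have h1 : w (((u⁻¹ : (𝓞 K)ˣ) : 𝓞 K) : K) * w (((u : (𝓞 K)ˣ) : 𝓞 K) : K) = 1 := by
        rw [← map_mul]
        have h0 : ((u⁻¹ : (𝓞 K)ˣ) : 𝓞 K) * ((u : (𝓞 K)ˣ) : 𝓞 K) = 1 := Units.inv_mul u
        have : (((u⁻¹ : (𝓞 K)ˣ) : 𝓞 K) : K) * (((u : (𝓞 K)ˣ) : 𝓞 K) : K) = 1 := by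
          exact_mod_cast h0
        rw [this, map_one]
      have h2 : w (((u⁻¹ : (𝓞 K)ˣ) : 𝓞 K) : K) = (w (((u : (𝓞 K)ˣ) : 𝓞 K) : K))⁻¹ :=
        eq_inv_of_mul_eq_one_left h1
      rw [h2, Real.log_inv, hudef, hprodlog c w]
    have hlogT : Real.log (w (((a : 𝓞 K) : K) * (((u⁻¹ : (𝓞 K)ˣ) : 𝓞 K) : K)) *
        ∏ j, (w ((η j : 𝓞 K) : K)) ^ (-(k j : ℝ) / (m j : ℝ)))
        = Real.log X / n + ∑ j, s j * Real.log (w ((η j : 𝓞 K) : K)) := by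
      rw [Real.log_mul (by rw [map_mul]; exact (mul_pos (hwa w) hwu).ne')
        (Finset.prod_pos fun j _ => Real.rpow_pos_of_pos (hwη w j) _).ne']
      rw [map_mul, Real.log_mul (hwa w).ne' hwu.ne']
      rw [Real.log_prod (fun j _ => (Real.rpow_pos_of_pos (hwη w j) _).ne')]
      rw [hlogu]
      have hFw := hF w
      simp only [hFdef] at hFw
      have hloga : Real.log (w ((a : 𝓞 K) : K))
          = Real.log X / n + ∑ j, t j * Real.log (w ((η j : 𝓞 K) : K)) := by linarith
      rw [hloga]
      rw [Finset.sum_congr rfl (fun j _ => Real.log_rpow (hwη w j) _)]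
      have e1 : ∑ j, (-(k j : ℝ) / (m j : ℝ)) * Real.log (w ((η j : 𝓞 K) : K))
          = - ∑ j, ((k j : ℝ) / (m j : ℝ)) * Real.log (w ((η j : 𝓞 K) : K)) := by
        rw [← Finset.sum_neg_distrib]
        exact Finset.sum_congr rfl fun j _ => by ring
      have e2 : ∑ j, s j * Real.log (w ((η j : 𝓞 K) : K))
          = ∑ j, t j * Real.log (w ((η j : 𝓞 K) : K))
            - ∑ j, (c j : ℝ) * Real.log (w ((η j : 𝓞 K) : K))
            - ∑ j, ((k j : ℝ) / (m j : ℝ)) * Real.log (w ((η j : 𝓞 K) : K)) := by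
        rw [← Finset.sum_sub_distrib, ← Finset.sum_sub_distrib]
        exact Finset.sum_congr rfl fun j _ => by simp only [hsdef]; ring
      rw [e1, e2]
      ring
    have hbound : Real.log X / n + ∑ j, s j * Real.log (w ((η j : 𝓞 K) : K))
        ≤ Real.log X / n + ∑ j, (m j : ℝ) := by
      have hterm : ∀ j, s j * Real.log (w ((η j : 𝓞 K) : K)) ≤ (m j : ℝ) := by
        intro j
        rcases le_or_gt 0 (Real.log (w ((η j : 𝓞 K) : K))) with hL | hL
        · calc s j * Real.log (w ((η j : 𝓞 K) : K))
              ≤ 1 * Real.log (w ((η j : 𝓞 K) : K)) :=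
                mul_le_mul_of_nonneg_right (hs1 j).le hL
            _ = Real.log (w ((η j : 𝓞 K) : K)) := one_mul _
            _ ≤ (m j : ℝ) := hm j w
        · have h1 : s j * Real.log (w ((η j : 𝓞 K) : K)) ≤ 0 :=
            mul_nonpos_of_nonneg_of_nonpos (hs0 j) hL.le
          have h2 : (0:ℝ) ≤ m j := by positivity
          linarith
      have := Finset.sum_le_sum (fun j (_ : j ∈ Finset.univ) => hterm j)
      linarith
    have hTle : w (((a : 𝓞 K) : K) * (((u⁻¹ : (𝓞 K)ˣ) : 𝓞 K) : K)) *
        ∏ j, (w ((η j : 𝓞 K) : K)) ^ (-(k j : ℝ) / (m j : ℝ))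
        ≤ Real.exp (Real.log X / n + ∑ j, (m j : ℝ)) := by
      rw [← Real.exp_log hTpos, hlogT]
      exact Real.exp_le_exp.mpr hbound
    refine hTle.trans (le_of_eq ?_)
    rw [Real.exp_add, hMdef]
    congr 1
    rw [Real.rpow_def_of_pos hXpos]
    rw [mul_one_div]
  -- sum up
  have hsum : ∑ w : InfinitePlace K,
      (w (((a : 𝓞 K) : K) * (((u⁻¹ : (𝓞 K)ˣ) : 𝓞 K) : K)) *
        ∏ j, (w ((η j : 𝓞 K) : K)) ^ (-(k j : ℝ) / (m j : ℝ))) ^ 2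
      ≤ (Fintype.card (InfinitePlace K) : ℝ) * M ^ 2 := by
    calc ∑ w : InfinitePlace K, (w (((a : 𝓞 K) : K) * (((u⁻¹ : (𝓞 K)ˣ) : 𝓞 K) : K)) *
          ∏ j, (w ((η j : 𝓞 K) : K)) ^ (-(k j : ℝ) / (m j : ℝ))) ^ 2
        ≤ ∑ _w : InfinitePlace K, M ^ 2 :=
          Finset.sum_le_sum fun w _ => pow_le_pow_left₀ (hTw w).1 (hTw w).2 2
      _ = (Fintype.card (InfinitePlace K) : ℝ) * M ^ 2 := by
          rw [Finset.sum_const, Finset.card_univ, nsmul_eq_mul]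
  have hcard : (Fintype.card (InfinitePlace K) : ℝ) = (rank K : ℝ) + 1 := by
    have h1 : rank K + 1 = Fintype.card (InfinitePlace K) :=
      Nat.succ_pred_eq_of_pos Fintype.card_pos
    rw [← h1]
    push_cast
    ring
  calc Real.sqrt (∑ w : InfinitePlace K,
        (w (((a : 𝓞 K) : K) * (((u⁻¹ : (𝓞 K)ˣ) : 𝓞 K) : K)) *
          ∏ j, (w ((η j : 𝓞 K) : K)) ^ (-(k j : ℝ) / (m j : ℝ))) ^ 2)
      ≤ Real.sqrt ((Fintype.card (InfinitePlace K) : ℝ) * M ^ 2) := Real.sqrt_le_sqrt hsum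
    _ = Real.sqrt ((rank K : ℝ) + 1) * M := by
        rw [hcard, Real.sqrt_mul (by positivity), Real.sqrt_sq hMnn]
    _ = X ^ ((1:ℝ)/n) * Real.sqrt ((rank K : ℝ) + 1) * Real.exp (∑ j, (m j : ℝ)) := by
        rw [hMdef]; ring

end UnitTwist


open scoped nonZeroDivisors in
open Real in
set_option maxHeartbeats 1000000 in
/-- By Minkowski's lattice point theorem there is a nonzero `a ∈ 𝔞𝔮` with
`|N(a)| < (2/π)^{r₂}·√|d_K|·N(𝔞𝔮)`, and for every integer vector
`k ∈ ∏_j [0, m_j)` there is a unit `u` such that the twisted embedding of `a·u⁻¹`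
satisfies `‖φ(a·u⁻¹)·β_k‖ ≤ |N(a)|^{1/n}·√(r+1)·e^{∑ m_j}`. -/
theorem minkowski_unit_twist (K : Type*) [Field K] [NumberField K]
    (n : ℕ) (hn : n = Module.finrank ℚ K) (hn2 : 2 ≤ n)
    (𝔞 𝔮 : Ideal (𝓞 K)) (h𝔞 : 𝔞 ≠ ⊥) (h𝔮 : 𝔮 ≠ ⊥) (hcop : 𝔞 ⊔ 𝔮 = ⊤)
    (η : Fin (rank K) → (𝓞 K)ˣ)
    (hindep : ∀ c : Fin (rank K) → ℤ, (∏ j, η j ^ c j) ∈ torsion K → c = 0)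
    (hgen : ∀ u : (𝓞 K)ˣ, ∃ ζ ∈ torsion K, ∃ c : Fin (rank K) → ℤ, u = ζ * ∏ j, η j ^ c j)
    (m : Fin (rank K) → ℕ) (hm1 : ∀ j, 1 ≤ m j)
    (hm : ∀ j, (m j : ℤ) = Finset.univ.sup'
      (Finset.univ_nonempty_iff.mpr inferInstance)
      (fun w : InfinitePlace K => ⌈Real.log (w ((η j : 𝓞 K) : K))⌉)) :
    ∃ a : 𝓞 K, a ∈ 𝔞 * 𝔮 ∧ a ≠ 0 ∧
      (|Algebra.norm ℚ ((a : 𝓞 K) : K)| : ℝ) <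
        (2 / Real.pi) ^ (nrComplexPlaces K) * Real.sqrt |(NumberField.discr K : ℝ)| *
          (Ideal.absNorm (𝔞 * 𝔮) : ℝ) ∧
      ∀ k : Fin (rank K) → ℤ, (∀ j, 0 ≤ k j ∧ k j < m j) →
        ∃ u : (𝓞 K)ˣ,
          Real.sqrt (∑ w : InfinitePlace K,
            (w (((a : 𝓞 K) : K) * (((u⁻¹ : (𝓞 K)ˣ) : 𝓞 K) : K)) *
              ∏ j, (w ((η j : 𝓞 K) : K)) ^ (-(k j : ℝ) / (m j : ℝ))) ^ 2) ≤
          (|Algebra.norm ℚ ((a : 𝓞 K) : K)| : ℝ) ^ ((1:ℝ) / n) *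
            Real.sqrt ((rank K : ℝ) + 1) * Real.exp (∑ j, (m j : ℝ)) := by
  classical
  have hm' : ∀ j (w : InfinitePlace K), Real.log (w ((η j : 𝓞 K) : K)) ≤ (m j : ℝ) := by
    intro j w
    have h1 : (⌈Real.log (w ((η j : 𝓞 K) : K))⌉ : ℤ) ≤ (m j : ℤ) := by
      rw [hm j]
      exact Finset.le_sup' (fun w : InfinitePlace K =>
        ⌈Real.log (w ((η j : 𝓞 K) : K))⌉) (Finset.mem_univ w)
    calc Real.log (w ((η j : 𝓞 K) : K)) ≤ (⌈Real.log (w ((η j : 𝓞 K) : K))⌉ : ℝ) := Int.le_ceil _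
      _ ≤ (m j : ℝ) := by exact_mod_cast h1
  have hAQ : 𝔞 * 𝔮 ≠ ⊥ := by
    rw [Ne, Ideal.mul_eq_bot]
    tauto
  have hJmem : 𝔞 * 𝔮 ∈ (Ideal (𝓞 K))⁰ := by
    rw [mem_nonZeroDivisors_iff_ne_zero]
    simpa [Submodule.zero_eq_bot] using hAQ
  set J : (Ideal (𝓞 K))⁰ := ⟨𝔞 * 𝔮, hJmem⟩ with hJdef
  obtain ⟨a', ha'mem, ha'nz, ha'nm⟩ :=
    NumberField.exists_ne_zero_mem_ideal_of_norm_le_mul_sqrt_discr K (FractionalIdeal.mk0 K J)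
  rw [FractionalIdeal.coe_mk0] at ha'mem
  obtain ⟨a, haI, rfl⟩ := (FractionalIdeal.mem_coeIdeal _).mp ha'mem
  have hanz : a ≠ 0 := by
    intro h
    exact ha'nz (by rw [h, map_zero])
  -- rewrite the norm bound
  have hJcoe : (J : Ideal (𝓞 K)) = 𝔞 * 𝔮 := rfl
  rw [FractionalIdeal.coe_mk0, FractionalIdeal.coeIdeal_absNorm, hJcoe] at ha'nm
  simp only [← RingOfIntegers.coe_eq_algebraMap] at ha'nm
  push_cast at ha'nm
  set nf : ℕ := Module.finrank ℚ K with hnf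
  set r2 : ℕ := nrComplexPlaces K with hr2
  set N : ℝ := (Ideal.absNorm (𝔞 * 𝔮) : ℝ) with hN
  set S : ℝ := Real.sqrt |(NumberField.discr K : ℝ)| with hS
  have hNpos : 0 < N := by
    rw [hN]
    have : Ideal.absNorm (𝔞 * 𝔮) ≠ 0 := by
      rw [Ne, Ideal.absNorm_eq_zero_iff]
      exact hAQ
    exact_mod_cast Nat.pos_of_ne_zero this
  have hSpos : 0 < S := by
    rw [hS]
    refine Real.sqrt_pos.mpr (abs_pos.mpr ?_)
    exact_mod_cast NumberField.discr_ne_zero K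
  have hπ : (0:ℝ) < π := Real.pi_pos
  have hnf2 : 2 ≤ nf := hn ▸ hn2
  have h2r2 : 2 * r2 ≤ nf := by
    have := NumberField.InfinitePlace.card_add_two_mul_card_eq_rank K
    omega
  have hnfpos : (0:ℝ) < (nf : ℝ) := by positivity
  have hBf : N * (4 / π) ^ r2 *
        (Nat.factorial nf : ℝ) / ((nf : ℝ) ^ nf) * S
      = ((2 / π) ^ r2 * S * N) * (((Nat.factorial nf : ℝ) * 2 ^ r2) / ((nf : ℝ) ^ nf)) := by
    have h4 : ((4:ℝ) / π) ^ r2 = (2 / π) ^ r2 * 2 ^ r2 := by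
      rw [← mul_pow]
      congr 1
      field_simp
      norm_num
    rw [h4]
    field_simp
  -- the norm as an integer
  have hnorm_int : Algebra.norm ℚ ((a : 𝓞 K) : K) = ((Algebra.norm ℤ a : ℤ) : ℚ) := by
    rw [← Algebra.coe_norm_int]
  have hbound : (|Algebra.norm ℚ ((a : 𝓞 K) : K)| : ℝ) <
      (2 / π) ^ r2 * S * N := by
    have hle : (|Algebra.norm ℚ ((a : 𝓞 K) : K)| : ℝ) ≤
        ((2 / π) ^ r2 * S * N) * (((Nat.factorial nf : ℝ) * 2 ^ r2) / ((nf : ℝ) ^ nf)) := by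
      rw [← hBf]
      exact ha'nm
    have hq1 : ((Nat.factorial nf : ℝ) * 2 ^ r2) / ((nf : ℝ) ^ nf) ≤ 1 := by
      rw [div_le_one (by positivity)]
      rcases Classical.em (nf = 2 ∧ r2 = 1) with hexc | hexc
      · rw [hexc.1, hexc.2]
        norm_num [Nat.factorial]
      · exact (fact_two_pow_lt nf r2 hnf2 h2r2 hexc).le
    have hBpos : (0:ℝ) < (2 / π) ^ r2 * S * N := by positivity
    rcases Classical.em (nf = 2 ∧ r2 = 1) with hexc | hexc
    · -- exceptional case: factor is exactly 1
      have hq1' : ((Nat.factorial nf : ℝ) * 2 ^ r2) / ((nf : ℝ) ^ nf) = 1 := by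
        rw [hexc.1, hexc.2]
        norm_num [Nat.factorial]
      rw [hq1', mul_one] at hle
      rcases lt_or_eq_of_le hle with h | h
      · exact h
      · -- equality is impossible since π² is irrational
        exfalso
        set zz : ℤ := Algebra.norm ℤ a with hzz
        have hzabs : (|Algebra.norm ℚ ((a : 𝓞 K) : K)| : ℝ) = |(zz : ℝ)| := by
          rw [hnorm_int]
          push_cast
          ring
        have hzne : (zz : ℝ) ≠ 0 := by
          have : Algebra.norm ℚ ((a : 𝓞 K) : K) ≠ 0 :=
            Algebra.norm_ne_zero_iff.mpr (RingOfIntegers.coe_ne_zero_iff.mpr hanz)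
          rw [hnorm_int] at this
          exact_mod_cast this
        rw [hzabs, hexc.2, pow_one] at h
        -- π * |zz| = 2 * S * N
        have hmul : π * |(zz : ℝ)| = 2 * S * N := by
          rw [h]
          field_simp
        have hsq : π ^ 2 * (zz : ℝ) ^ 2 = 4 * |(NumberField.discr K : ℝ)| * N ^ 2 := by
          have h1 := congrArg (fun x : ℝ => x ^ 2) hmul
          simp only [mul_pow, sq_abs] at h1
          rw [hS] at h1
          rw [Real.sq_sqrt (abs_nonneg _)] at h1
          nlinarith [h1]
        have hrat : π ^ 2 = ((4 * |(NumberField.discr K : ℚ)| *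
            (Ideal.absNorm (𝔞 * 𝔮) : ℚ) ^ 2 / (zz : ℚ) ^ 2 : ℚ) : ℝ) := by
          have hz2 : (zz : ℝ) ^ 2 ≠ 0 := pow_ne_zero 2 hzne
          push_cast
          rw [eq_div_iff hz2]
          rw [hsq, hN]
        exact PiSqAux.irrational_pi_sq ⟨_, hrat.symm⟩
    · have hqlt : ((Nat.factorial nf : ℝ) * 2 ^ r2) / ((nf : ℝ) ^ nf) < 1 := by
        rw [div_lt_one (by positivity)]
        exact fact_two_pow_lt nf r2 hnf2 h2r2 hexc
      calc (|Algebra.norm ℚ ((a : 𝓞 K) : K)| : ℝ)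
          ≤ ((2 / π) ^ r2 * S * N) * (((Nat.factorial nf : ℝ) * 2 ^ r2) / ((nf : ℝ) ^ nf)) := hle
        _ < ((2 / π) ^ r2 * S * N) * 1 := by
            exact mul_lt_mul_of_pos_left hqlt hBpos
        _ = (2 / π) ^ r2 * S * N := mul_one _
  refine ⟨a, haI, hanz, hbound, ?_⟩
  intro k hk
  exact unit_twist_aux K n hn (by omega) η hgen m hm1 hm' a hanz k hk
end
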